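/- Let D ≥ 1 and let B₁,…,B_k be matrices indexed by (Fin D × Fin D), i.e., B_i ∈ Matrix (Fin D × Fin D) (Fin D × Fin D) ℚ. Define C_i ∈ Matrix (Fin D × Fin D) (Fin D × Fin D) ℚ by the reshuffling (C_i)_{(α₁,α₂),(β₁,β₂)} = (B_i)_{(α₁,β₁),(α₂,β₂)}. Then for every n ≥ 1 and every index sequence i₁,…,i_n ∈ {1,…,k}: Σ_{j, j' : Fin n → Fin D} ∏_{t=1}^{n} (C_{i_t})_{(j_t, j_{t+1}), (j'_t, j'_{t+1})} = tr(B_{i₁}·B_{i₂}⋯B_{i_n}), where indices are cyclic (j_{n+1} = j₁, j'_{n+1} = j'₁). Equivalently, ⟨χ_n| C_{i₁}⊗⋯⊗C_{i_n} |χ_n⟩ = tr(B_{i₁}⋯B_{i_n}) for the matrix-multiplication vector |χ_n⟩ = Σ_{j₁,…,j_n} |j₁ j₂⟩⊗⋯⊗|j_n j₁⟩. -/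

import Mathlib

open Matrix

section Aux

variable {ι : Type*} [Fintype ι] [DecidableEq ι]

lemma pathSum : ∀ (n : ℕ) (M : Fin n → Matrix ι ι ℚ) (a : ι) (v : ι → ℚ),
    ((List.ofFn M).prod *ᵥ v) a
      = ∑ g : Fin n → ι,
          (∏ t : Fin n, M t ((Fin.cons a g : Fin (n+1) → ι) t.castSucc) (g t))
            * v ((Fin.cons a g : Fin (n+1) → ι) (Fin.last n))
  | 0, M, a, v => by simp
  | (n+1), M, a, v => by
    conv_rhs => rw [← Equiv.sum_comp (Fin.consEquiv fun _ : Fin (n+1) => ι)]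
    rw [Fintype.sum_prod_type]
    have key : ∀ (b : ι) (u : Fin n → ι),
        (∏ t : Fin (n+1),
            M t ((Fin.cons a (Fin.cons b u) : Fin (n+2) → ι) t.castSucc)
              ((Fin.cons b u : Fin (n+1) → ι) t))
            * v ((Fin.cons a (Fin.cons b u) : Fin (n+2) → ι) (Fin.last (n+1)))
        = M 0 a b * ((∏ t : Fin n, M t.succ ((Fin.cons b u : Fin (n+1) → ι) t.castSucc) (u t))
            * v ((Fin.cons b u : Fin (n+1) → ι) (Fin.last n))) := by
      intro b u
      rw [Fin.prod_univ_succ]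
      have h1 : ∀ t : Fin n, ((Fin.cons a (Fin.cons b u) : Fin (n+2) → ι) (t.succ.castSucc) : ι)
          = (Fin.cons b u : Fin (n+1) → ι) t.castSucc := by
        intro t
        rw [← Fin.succ_castSucc, Fin.cons_succ]
      have h2 : ((Fin.cons a (Fin.cons b u) : Fin (n+2) → ι) (Fin.last (n+1)) : ι)
          = (Fin.cons b u : Fin (n+1) → ι) (Fin.last n) := by
        rw [← Fin.succ_last, Fin.cons_succ]
      simp only [h2, Fin.castSucc_zero, Fin.cons_zero, Fin.cons_succ, h1]
      ring
    show ((List.ofFn M).prod *ᵥ v) a =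
      ∑ x : ι, ∑ y : Fin n → ι,
        (∏ t : Fin (n + 1),
            M t ((Fin.cons a (Fin.cons x y) : Fin (n+2) → ι) t.castSucc)
              ((Fin.cons x y : Fin (n+1) → ι) t)) *
          v ((Fin.cons a (Fin.cons x y) : Fin (n+2) → ι) (Fin.last (n + 1)))
    simp only [key]
    simp only [← Finset.mul_sum, ← pathSum n (fun i => M i.succ)]
    rw [List.ofFn_succ, List.prod_cons, ← Matrix.mulVec_mulVec, Matrix.mulVec, dotProduct]

lemma cyc (n : ℕ) [NeZero n] (M : Fin n → Matrix ι ι ℚ) :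
    ∑ f : Fin n → ι, ∏ t : Fin n, M t (f t) (f (t + 1))
      = Matrix.trace (List.ofFn M).prod := by
  obtain ⟨m, rfl⟩ : ∃ m, n = m + 1 := ⟨n - 1, (Nat.succ_pred_eq_of_pos (NeZero.pos n)).symm⟩
  rw [Matrix.trace]
  have hdiag : ∀ a : ι, (List.ofFn M).prod.diag a
      = ∑ g : Fin (m+1) → ι,
          (∏ t : Fin (m+1), M t ((Fin.cons a g : Fin (m+2) → ι) t.castSucc) (g t))
            * (Pi.single a 1 : ι → ℚ) ((Fin.cons a g : Fin (m+2) → ι) (Fin.last (m+1))) := by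
    intro a
    rw [← pathSum]
    simp [Matrix.mulVec_single, Matrix.diag]
  simp only [hdiag]
  rw [Finset.sum_comm]
  have hterm : ∀ g : Fin (m+1) → ι, ∀ a : ι,
      (∏ t : Fin (m+1), M t ((Fin.cons a g : Fin (m+2) → ι) t.castSucc) (g t))
          * (Pi.single a 1 : ι → ℚ) ((Fin.cons a g : Fin (m+2) → ι) (Fin.last (m+1)))
      = if g (Fin.last m) = a
          then ∏ t : Fin (m+1), M t ((Fin.cons a g : Fin (m+2) → ι) t.castSucc) (g t) else 0 := by
    intro g a
    rw [← Fin.succ_last, Fin.cons_succ, Pi.single_apply]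
    split <;> simp
  simp only [hterm, Finset.sum_ite_eq, Finset.mem_univ, if_true]
  refine Fintype.sum_bijective (fun f : Fin (m+1) → ι => fun t => f (t + 1)) ?_ _ _ ?_
  · refine Function.bijective_iff_has_inverse.mpr
      ⟨fun f t => f (t - 1), fun f => ?_, fun f => ?_⟩ <;> funext t <;> simp
  · intro f
    apply Finset.prod_congr rfl
    intro t _
    congr 1
    rcases Fin.eq_zero_or_eq_succ t with h | ⟨s, rfl⟩
    · subst h
      simp [Fin.last_add_one]
    · rw [← Fin.succ_castSucc, Fin.cons_succ]
      simp only [Fin.coeSucc_eq_succ]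

end Aux

/-- The reshuffling `(C)_{(α₁,α₂),(β₁,β₂)} = (B)_{(α₁,β₁),(α₂,β₂)}`. -/
def reshuffle {D : ℕ} (B : Matrix (Fin D × Fin D) (Fin D × Fin D) ℚ) :
    Matrix (Fin D × Fin D) (Fin D × Fin D) ℚ :=
  Matrix.of fun p q => B (p.1, q.1) (p.2, q.2)

theorem reshuffle_chi_eq_trace {D k : ℕ} (hD : 1 ≤ D)
    (B : Fin k → Matrix (Fin D × Fin D) (Fin D × Fin D) ℚ)
    (n : ℕ) [NeZero n] (idx : Fin n → Fin k) :
    (∑ j : Fin n → Fin D, ∑ j' : Fin n → Fin D,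
        ∏ t : Fin n,
          reshuffle (B (idx t)) (j t, j (t + 1)) (j' t, j' (t + 1))) =
      Matrix.trace ((List.ofFn fun t => B (idx t)).prod) := by
  rw [← cyc n fun t => B (idx t)]
  rw [← Equiv.sum_comp (Equiv.arrowProdEquivProdArrow (Fin n) (fun _ => Fin D) (fun _ => Fin D)).symm,
    Fintype.sum_prod_type]
  rfl
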